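/- Let ξ : ℤ → {−1,0,1} be a configuration, l ≥ 1 an integer, m ≤ n integers, and suppose ξ has a maximal (l+1)-run of sign s at a within [m,n]. Consider the right endpoint x = a+l (resp. the left endpoint x = a). Then g^l_{m,n}(ξ^{x→−s}) ≥ g^l_{m,n}(ξ) + 1, unless ξ has a maximal l-run of sign −s at a+l+1 within [m,n] (resp. at a−l within [m,n]), in which case still g^l_{m,n}(ξ^{x→−s}) ≥ g^l_{m,n}(ξ). In words: changing an endpoint of a maximal (l+1)-run to the opposite sign creates a counted l-run, and can fail to increase the count only by simultaneously destroying an adjacent counted l-run of the opposite sign. -/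

import Mathlib

/-- `ξ` has a maximal `l`-run of sign `s` at `a` within `[m, n]`:
`ξ (a+i) = s` for `0 ≤ i ≤ l-1`, `ξ (a-1) ≠ s`, `ξ (a+l) ≠ s`, `m ≤ a`, `a+l-1 ≤ n`. -/
def IsMaxRun (ξ : ℤ → ℤ) (l m n a s : ℤ) : Prop :=
  (∀ i : ℤ, 0 ≤ i → i ≤ l - 1 → ξ (a + i) = s) ∧
    ξ (a - 1) ≠ s ∧ ξ (a + l) ≠ s ∧ m ≤ a ∧ a + l - 1 ≤ n

/-- `g^l_{m,n}(ξ)`: the number of pairs `(a, s)` with `s ∈ {−1, 1}` such that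
`ξ` has a maximal `l`-run of sign `s` at `a` within `[m, n]`. -/
noncomputable def runCount (l m n : ℤ) (ξ : ℤ → ℤ) : ℕ :=
  Set.ncard {p : ℤ × ℤ | (p.2 = 1 ∨ p.2 = -1) ∧ IsMaxRun ξ l m n p.1 p.2}

lemma runs_finite (l m n : ℤ) (hl : 1 ≤ l) (ζ : ℤ → ℤ) :
    {p : ℤ × ℤ | (p.2 = 1 ∨ p.2 = -1) ∧ IsMaxRun ζ l m n p.1 p.2}.Finite := by
  apply Set.Finite.subset ((Set.finite_Icc m n).prod (Set.toFinite ({1, -1} : Set ℤ)))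
  rintro ⟨b, t⟩ ⟨ht, h⟩
  refine ⟨⟨h.2.2.2.1, by have := h.2.2.2.2; omega⟩, ?_⟩
  simp only [Set.mem_insert_iff, Set.mem_singleton_iff]
  tauto

lemma count_lemma {A B : Set (ℤ × ℤ)} (hA : A.Finite) (hB : B.Finite)
    {D N : ℤ × ℤ} (hNB : N ∈ B) (hNA : N ∉ A) (hsub : A \ {D} ⊆ B) :
    B.ncard ≥ A.ncard ∧ (D ∉ A → B.ncard ≥ A.ncard + 1) := by
  have hfin : (A \ {D}).Finite := hA.diff
  have hsub2 : insert N (A \ {D}) ⊆ B := by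
    intro x hx
    rcases hx with rfl | hx
    · exact hNB
    · exact hsub hx
  have h1 : (insert N (A \ {D})).ncard = (A \ {D}).ncard + 1 :=
    Set.ncard_insert_of_notMem (fun h => hNA h.1) hfin
  have h2 : (insert N (A \ {D})).ncard ≤ B.ncard := Set.ncard_le_ncard hsub2 hB
  have h3 : A.ncard ≤ (A \ {D}).ncard + 1 := by
    calc A.ncard ≤ (insert D (A \ {D})).ncard := by
          refine Set.ncard_le_ncard (fun x hx => ?_) (hfin.insert D)
          by_cases hx' : x = D
          · exact Or.inl hx'
          · exact Or.inr ⟨hx, hx'⟩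
      _ ≤ (A \ {D}).ncard + 1 := Set.ncard_insert_le _ _
  refine ⟨by omega, fun hD => ?_⟩
  have h4 : A ⊆ A \ {D} := fun x hx => ⟨hx, fun hxD => hD (hxD ▸ hx)⟩
  have h5 : A.ncard ≤ (A \ {D}).ncard := Set.ncard_le_ncard h4 hfin
  omega

lemma run_update (ξ : ℤ → ℤ) (l m n b t x v : ℤ) (hl : 1 ≤ l) (hx : x < b - 1 ∨ b + l < x)
    (h : IsMaxRun ξ l m n b t) : IsMaxRun (Function.update ξ x v) l m n b t := by
  obtain ⟨h1, h2, h3, h4, h5⟩ := h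
  refine ⟨fun i hi0 hi1 => ?_, ?_, ?_, h4, h5⟩
  · rw [Function.update_of_ne (show b + i ≠ x by omega)]; exact h1 i hi0 hi1
  · rw [Function.update_of_ne (show b - 1 ≠ x by omega)]; exact h2
  · rw [Function.update_of_ne (show b + l ≠ x by omega)]; exact h3

theorem runCount_update_oppSign (ξ : ℤ → ℤ) (hξ : ∀ x, ξ x = -1 ∨ ξ x = 0 ∨ ξ x = 1)
    (l m n a s : ℤ) (hl : 1 ≤ l) (hmn : m ≤ n) (hs : s = 1 ∨ s = -1)
    (hrun : IsMaxRun ξ (l + 1) m n a s) :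
    (runCount l m n (Function.update ξ (a + l) (-s)) ≥ runCount l m n ξ ∧
      (¬ IsMaxRun ξ l m n (a + l + 1) (-s) →
        runCount l m n (Function.update ξ (a + l) (-s)) ≥ runCount l m n ξ + 1)) ∧
    (runCount l m n (Function.update ξ a (-s)) ≥ runCount l m n ξ ∧
      (¬ IsMaxRun ξ l m n (a - l) (-s) →
        runCount l m n (Function.update ξ a (-s)) ≥ runCount l m n ξ + 1)) := by
  obtain ⟨hr1, hr2, hr3, hr4, hr5⟩ := hrun
  have hns : -s ≠ s := by rcases hs with rfl | rfl <;> decide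
  have hval : ∀ i : ℤ, 0 ≤ i → i ≤ l → ξ (a + i) = s := fun i hi0 hi1 =>
    hr1 i hi0 (by omega)
  have hr3' : ξ (a + l + 1) ≠ s := by
    have : a + (l + 1) = a + l + 1 := by ring
    rwa [this] at hr3
  have hA := runs_finite l m n hl ξ
  constructor
  · -- right endpoint case
    set ξ' := Function.update ξ (a + l) (-s) with hξ'
    have hB := runs_finite l m n hl ξ'
    have hNB : ((a, s) : ℤ × ℤ) ∈
        {p : ℤ × ℤ | (p.2 = 1 ∨ p.2 = -1) ∧ IsMaxRun ξ' l m n p.1 p.2} := by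
      refine ⟨hs, fun i hi0 hi1 => ?_, ?_, ?_, hr4, by omega⟩
      · rw [hξ', Function.update_of_ne (by omega)]; exact hval i hi0 (by omega)
      · rw [hξ', Function.update_of_ne (by omega)]; exact hr2
      · rw [hξ', Function.update_self]; exact hns
    have hNA : ((a, s) : ℤ × ℤ) ∉
        {p : ℤ × ℤ | (p.2 = 1 ∨ p.2 = -1) ∧ IsMaxRun ξ l m n p.1 p.2} := by
      rintro ⟨-, -, -, h3, -⟩
      exact h3 (hval l (by omega) le_rfl)
    have hsub : {p : ℤ × ℤ | (p.2 = 1 ∨ p.2 = -1) ∧ IsMaxRun ξ l m n p.1 p.2} \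
        {((a + l + 1 : ℤ), -s)} ⊆
        {p : ℤ × ℤ | (p.2 = 1 ∨ p.2 = -1) ∧ IsMaxRun ξ' l m n p.1 p.2} := by
      rintro ⟨b, t⟩ ⟨⟨ht, hbt⟩, hne⟩
      simp only [Set.mem_singleton_iff, Prod.mk.injEq, not_and] at hne
      refine ⟨ht, run_update ξ l m n b t (a + l) (-s) hl ?_ hbt⟩
      by_contra hcon
      push_neg at hcon
      have hwin : a ≤ b ∧ b ≤ a + l + 1 := by omega
      have hb0 : ξ b = t := by
        have := hbt.1 0 le_rfl (by omega)
        rwa [add_zero] at this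
      rcases eq_or_lt_of_le hwin.2 with hb | hb
      · -- b = a + l + 1
        have hts : t ≠ s := by rw [hb] at hb0; rw [← hb0]; exact hr3'
        have : t = -s := by rcases hs with rfl | rfl <;> rcases ht with rfl | rfl <;> omega
        exact hne hb this
      · -- a ≤ b ≤ a + l
        have hbs : ξ b = s := by
          have := hval (b - a) (by omega) (by omega)
          rwa [show a + (b - a) = b by ring] at this
        have hts : t = s := by rw [← hb0, hbs]
        rcases eq_or_lt_of_le hwin.1 with hba | hba
        · -- b = a
          refine hbt.2.2.1 ?_
          rw [← hba, hts]
          exact hval l (by omega) le_rfl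
        · -- a < b
          refine hbt.2.1 ?_
          rw [hts]
          have := hval (b - 1 - a) (by omega) (by omega)
          rwa [show a + (b - 1 - a) = b - 1 by ring] at this
    obtain ⟨hge, hge1⟩ := count_lemma hA hB hNB hNA hsub
    refine ⟨hge, fun hD => hge1 ?_⟩
    rintro ⟨-, hDrun⟩
    exact hD hDrun
  · -- left endpoint case
    set ξ' := Function.update ξ a (-s) with hξ'
    have hB := runs_finite l m n hl ξ'
    have hNB : ((a + 1, s) : ℤ × ℤ) ∈
        {p : ℤ × ℤ | (p.2 = 1 ∨ p.2 = -1) ∧ IsMaxRun ξ' l m n p.1 p.2} := by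
      refine ⟨hs, fun i hi0 hi1 => ?_, ?_, ?_, by omega, by omega⟩
      · rw [hξ', Function.update_of_ne (by omega), show a + 1 + i = a + (1 + i) by ring]
        exact hval (1 + i) (by omega) (by omega)
      · rw [show a + 1 - 1 = a by ring, hξ', Function.update_self]; exact hns
      · rw [hξ', Function.update_of_ne (by omega), show a + 1 + l = a + l + 1 by ring]
        exact hr3'
    have hNA : ((a + 1, s) : ℤ × ℤ) ∉
        {p : ℤ × ℤ | (p.2 = 1 ∨ p.2 = -1) ∧ IsMaxRun ξ l m n p.1 p.2} := by
      rintro ⟨-, -, h2, -⟩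
      rw [show a + 1 - 1 = a by ring] at h2
      exact h2 (by have := hval 0 le_rfl (by omega); rwa [add_zero] at this)
    have hsub : {p : ℤ × ℤ | (p.2 = 1 ∨ p.2 = -1) ∧ IsMaxRun ξ l m n p.1 p.2} \
        {((a - l : ℤ), -s)} ⊆
        {p : ℤ × ℤ | (p.2 = 1 ∨ p.2 = -1) ∧ IsMaxRun ξ' l m n p.1 p.2} := by
      rintro ⟨b, t⟩ ⟨⟨ht, hbt⟩, hne⟩
      simp only [Set.mem_singleton_iff, Prod.mk.injEq, not_and] at hne
      refine ⟨ht, run_update ξ l m n b t a (-s) hl ?_ hbt⟩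
      by_contra hcon
      push_neg at hcon
      have hwin : a - l ≤ b ∧ b ≤ a + 1 := by omega
      have hb0 : ξ b = t := by
        have := hbt.1 0 le_rfl (by omega)
        rwa [add_zero] at this
      have ha0 : ξ a = s := by have := hval 0 le_rfl (by omega); rwa [add_zero] at this
      rcases eq_or_lt_of_le hwin.1 with hb | hb
      · -- b = a - l
        have hts : t ≠ s := by
          intro hts
          refine hbt.2.2.1 ?_
          rw [← hb, show a - l + l = a by ring, ha0, hts]
        have : t = -s := by rcases hs with rfl | rfl <;> rcases ht with rfl | rfl <;> omega
        exact hne hb.symm this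
      · rcases eq_or_lt_of_le hwin.2 with hb2 | hb2
        · -- b = a + 1
          have hbs : ξ b = s := by
            rw [hb2]
            have := hval 1 (by omega) (by omega)
            rwa [show a + 1 = a + 1 by ring] at this
          have hts : t = s := by rw [← hb0, hbs]
          refine hbt.2.1 ?_
          rw [hts, hb2, show a + 1 - 1 = a by ring]; exact ha0
        · -- a - l < b ≤ a
          have hts : t = s := by
            have := hbt.1 (a - b) (by omega) (by omega)
            rw [show b + (a - b) = a by ring, ha0] at this
            omega
          refine hbt.2.2.1 ?_
          rw [hts]
          have := hval (b + l - a) (by omega) (by omega)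
          rwa [show a + (b + l - a) = b + l by ring] at this
    obtain ⟨hge, hge1⟩ := count_lemma hA hB hNB hNA hsub
    refine ⟨hge, fun hD => hge1 ?_⟩
    rintro ⟨-, hDrun⟩
    exact hD hDrun
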